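/- Let Y = (Y_t)_{t≥0} be a continuous-time Markov chain on a countable set S with 0 ∈ S absorbing, total jump rate r(y) > 0 for y ≠ 0, embedded jump chain Z = (Z_n), and holding times σ_n/r(Z_n) with (σ_n) i.i.d. Exponential(1) independent of Z. Fix a trajectory z = (z_n) of the jump chain along which the set {n : z_n ∈ D} is infinite for some D ⊆ S with sup_{y ∈ D} r(y) < ∞. Then with η(t) := sup{n : Σ_{k=1}^n σ_k/r(z_k) ≤ t}, for every S' > 0: lim_{t→∞} sup_{s ∈ [0,S']} Σ_{n : z_n ∈ D} |P[η(t) = n] − P[η(t+s) = n]| = 0. -/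

import Mathlib

open MeasureTheory ProbabilityTheory Classical

open Set

namespace EmbeddedAux



lemma exp_point (ν : Measure ℝ) [IsProbabilityMeasure ν]
    (hexp : ∀ c : ℝ, 0 ≤ c → ν (Ici c) = ENNReal.ofReal (Real.exp (-c)))
    {c : ℝ} (hc : 0 ≤ c) : ν {c} = 0 := by
  refine le_antisymm ?_ (zero_le)
  refine ENNReal.le_of_forall_pos_le_add fun δ hδ _ => ?_
  rw [zero_add]
  have hsub : ({c} : Set ℝ) ⊆ Ici c \ Ici (c + δ) := by
    intro x hx
    rcases hx with rfl
    refine ⟨mem_Ici.2 (le_refl _), ?_⟩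
    simp only [mem_Ici, not_le]
    have : (0:ℝ) < δ := hδ
    linarith
  refine le_trans (measure_mono hsub) ?_
  have hdiff : ν (Ici c \ Ici (c + δ)) = ν (Ici c) - ν (Ici (c + δ)) := by
    refine measure_diff ?_ measurableSet_Ici.nullMeasurableSet (measure_ne_top ν _)
    intro x hx
    simp only [mem_Ici] at hx ⊢
    have : (0:ℝ) < δ := hδ
    linarith
  rw [hdiff, hexp c hc, hexp (c + δ) (by positivity),
    ← ENNReal.ofReal_sub _ (Real.exp_nonneg _)]
  have hreal : Real.exp (-c) - Real.exp (-(c + δ)) ≤ (δ : ℝ) := by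
    have h1 : Real.exp (-c) ≤ 1 := Real.exp_le_one_iff.2 (by linarith)
    have h2 : 1 - (δ:ℝ) ≤ Real.exp (-(δ:ℝ)) := by
      have := Real.add_one_le_exp (-(δ:ℝ)); linarith
    have h3 : Real.exp (-(c + δ)) = Real.exp (-c) * Real.exp (-(δ:ℝ)) := by
      rw [← Real.exp_add]; ring_nf
    have h4 : Real.exp (-c) * (1 - Real.exp (-(δ:ℝ))) ≤ 1 * (δ:ℝ) := by
      apply mul_le_mul h1 (by linarith) (by nlinarith [Real.exp_le_one_iff.2 (neg_nonpos.2 (le_of_lt (show (0:ℝ) < δ from hδ)))]) (by norm_num)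
    nlinarith
  calc ENNReal.ofReal (Real.exp (-c) - Real.exp (-(c + δ)))
      ≤ ENNReal.ofReal (δ:ℝ) := ENNReal.ofReal_le_ofReal hreal
    _ = (δ : ENNReal) := ENNReal.ofReal_coe_nnreal

lemma exp_Ioi (ν : Measure ℝ) [IsProbabilityMeasure ν]
    (hexp : ∀ c : ℝ, 0 ≤ c → ν (Ici c) = ENNReal.ofReal (Real.exp (-c)))
    (c : ℝ) : ν (Ioi c) = ENNReal.ofReal (Real.exp (-max c 0)) := by
  rcases le_or_gt 0 c with hc | hc
  · have h1 : (Ioi c : Set ℝ) = Ici c \ {c} := by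
      ext x; simp only [mem_Ioi, mem_diff, mem_Ici, mem_singleton_iff]
      constructor
      · intro h; exact ⟨le_of_lt h, ne_of_gt h⟩
      · intro ⟨h1, h2⟩; exact lt_of_le_of_ne h1 (Ne.symm h2)
    rw [h1, measure_diff_null (exp_point ν hexp hc), hexp c hc, max_eq_left hc]
  · have hm : max c 0 = 0 := max_eq_right (le_of_lt hc)
    rw [hm]
    simp only [neg_zero, Real.exp_zero, ENNReal.ofReal_one]
    refine le_antisymm prob_le_one ?_
    have : (Ici (0:ℝ) : Set ℝ) ⊆ Ioi c := fun x hx => lt_of_lt_of_le hc hx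
    calc (1:ENNReal) = ν (Ici 0) := by rw [hexp 0 le_rfl]; simp
      _ ≤ ν (Ioi c) := measure_mono this

lemma exp_Iio_zero (ν : Measure ℝ) [IsProbabilityMeasure ν]
    (hexp : ∀ c : ℝ, 0 ≤ c → ν (Ici c) = ENNReal.ofReal (Real.exp (-c))) :
    ν (Iio 0) = 0 := by
  have h : (Iio (0:ℝ)) = (Ici (0:ℝ))ᶜ := by ext x; simp
  rw [h, measure_compl measurableSet_Ici (measure_ne_top ν _), hexp 0 le_rfl]
  simp

lemma exp_Ioc (ν : Measure ℝ) [IsProbabilityMeasure ν]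
    (hexp : ∀ c : ℝ, 0 ≤ c → ν (Ici c) = ENNReal.ofReal (Real.exp (-c)))
    (c d : ℝ) :
    ν (Ioc c d) = ENNReal.ofReal (Real.exp (-max c 0)) - ENNReal.ofReal (Real.exp (-max d 0)) := by
  rcases le_or_gt c d with hcd | hcd
  · have h1 : (Ioc c d) = Ioi c \ Ioi d := by rw [Set.Ioi_diff_Ioi]
    have hss : Ioi d ⊆ Ioi c := fun x hx => lt_of_le_of_lt hcd hx
    rw [h1, measure_diff hss measurableSet_Ioi.nullMeasurableSet (measure_ne_top ν _),
      exp_Ioi ν hexp, exp_Ioi ν hexp]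
  · rw [Set.Ioc_eq_empty (not_lt.2 (le_of_lt hcd)), measure_empty]
    symm
    rw [tsub_eq_zero_iff_le]
    apply ENNReal.ofReal_le_ofReal
    apply Real.exp_le_exp.2
    simp only [neg_le_neg_iff]
    exact max_le_max (le_of_lt hcd) le_rfl

lemma exp_shift (ν : Measure ℝ) [IsProbabilityMeasure ν]
    (hexp : ∀ c : ℝ, 0 ≤ c → ν (Ici c) = ENNReal.ofReal (Real.exp (-c)))
    {a : ℝ} (ha : 0 ≤ a) (c d : ℝ) :
    ν {x | a ≤ x ∧ c + a < x ∧ x ≤ d + a}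
      = ENNReal.ofReal (Real.exp (-a)) * ν (Ioc c d) := by
  rcases lt_or_ge d 0 with hd | hd
  · have h1 : {x : ℝ | a ≤ x ∧ c + a < x ∧ x ≤ d + a} = ∅ := by
      ext x; simp only [mem_setOf_eq, mem_empty_iff_false, iff_false, not_and]
      intro h1 h2 h3; linarith
    have h2 : ν (Ioc c d) = 0 := by
      refine le_antisymm (le_trans (measure_mono ?_) (exp_Iio_zero ν hexp).le) (zero_le)
      intro x hx; exact lt_of_le_of_lt hx.2 hd
    rw [h1, h2, measure_empty, mul_zero]
  · -- main case d ≥ 0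
    have hkey : ν {x | a ≤ x ∧ c + a < x ∧ x ≤ d + a} = ν (Ioc (max c 0 + a) (d + a)) := by
      refine le_antisymm ?_ (measure_mono ?_)
      · have hsub : {x : ℝ | a ≤ x ∧ c + a < x ∧ x ≤ d + a}
            ⊆ Ioc (max c 0 + a) (d + a) ∪ {a} := by
          intro x ⟨h1, h2, h3⟩
          rcases eq_or_lt_of_le h1 with rfl | h1'
          · exact Or.inr rfl
          · left; refine ⟨?_, h3⟩
            rcases max_cases c 0 with ⟨hm, _⟩ | ⟨hm, _⟩ <;> rw [hm] <;> linarith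
        refine le_trans (measure_mono hsub) ?_
        refine le_trans (measure_union_le _ _) ?_
        rw [exp_point ν hexp ha, add_zero]
      · intro x hx
        simp only [mem_Ioc] at hx
        have hmc : c ≤ max c 0 := le_max_left _ _
        have h0c : (0:ℝ) ≤ max c 0 := le_max_right _ _
        exact ⟨by linarith [hx.1], by linarith [hx.1], hx.2⟩
    rw [hkey, exp_Ioc ν hexp, exp_Ioc ν hexp]
    have hm1 : max (max c 0 + a) 0 = max c 0 + a := max_eq_left (by positivity)
    have hm2 : max (d + a) 0 = d + a := max_eq_left (by positivity)
    have hm3 : max d 0 = d := max_eq_left hd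
    rw [hm1, hm2, hm3]
    rw [← ENNReal.ofReal_sub _ (Real.exp_nonneg _), ← ENNReal.ofReal_sub _ (Real.exp_nonneg _),
      ← ENNReal.ofReal_mul (Real.exp_nonneg _)]
    congr 1
    rw [mul_sub, ← Real.exp_add, ← Real.exp_add]
    ring_nf

lemma shift_identity {Ω : Type*} [MeasurableSpace Ω] (μ : Measure Ω) [IsProbabilityMeasure μ]
    (X : Ω → ℝ) (hX : Measurable X) (Y : Ω → ℝ × ℝ) (hY : Measurable Y)
    (hind : IndepFun Y X μ)
    (hexpX : ∀ c : ℝ, 0 ≤ c → μ {ω | c ≤ X ω} = ENNReal.ofReal (Real.exp (-c)))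
    {a : ℝ} (ha : 0 ≤ a) (c d : ℝ × ℝ → ℝ) (hc : Measurable c) (hd : Measurable d) :
    μ {ω | a ≤ X ω ∧ c (Y ω) + a < X ω ∧ X ω ≤ d (Y ω) + a}
      = ENNReal.ofReal (Real.exp (-a)) * μ {ω | c (Y ω) < X ω ∧ X ω ≤ d (Y ω)} := by
  have hνP : IsProbabilityMeasure (μ.map X) := Measure.isProbabilityMeasure_map hX.aemeasurable
  have hexpν : ∀ c : ℝ, 0 ≤ c → (μ.map X) (Ici c) = ENNReal.ofReal (Real.exp (-c)) := by
    intro c hc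
    rw [Measure.map_apply hX measurableSet_Ici]
    exact hexpX c hc
  have hmap : μ.map (fun ω => (Y ω, X ω)) = (μ.map Y).prod (μ.map X) :=
    (indepFun_iff_map_prod_eq_prod_map_map hY.aemeasurable hX.aemeasurable).mp hind
  have hM1 : MeasurableSet {p : (ℝ × ℝ) × ℝ | a ≤ p.2 ∧ c p.1 + a < p.2 ∧ p.2 ≤ d p.1 + a} := by
    simp only [Set.setOf_and]
    exact (measurableSet_le measurable_const measurable_snd).inter
      ((measurableSet_lt ((hc.comp measurable_fst).add_const a) measurable_snd).inter
        (measurableSet_le measurable_snd ((hd.comp measurable_fst).add_const a)))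
  have hM2 : MeasurableSet {p : (ℝ × ℝ) × ℝ | c p.1 < p.2 ∧ p.2 ≤ d p.1} := by
    simp only [Set.setOf_and]
    exact (measurableSet_lt (hc.comp measurable_fst) measurable_snd).inter
      (measurableSet_le measurable_snd (hd.comp measurable_fst))
  have key1 : μ {ω | a ≤ X ω ∧ c (Y ω) + a < X ω ∧ X ω ≤ d (Y ω) + a}
      = ((μ.map Y).prod (μ.map X)) {p : (ℝ × ℝ) × ℝ | a ≤ p.2 ∧ c p.1 + a < p.2 ∧ p.2 ≤ d p.1 + a} := by
    rw [← hmap, Measure.map_apply (hY.prodMk hX) hM1]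
    rfl
  have key2 : μ {ω | c (Y ω) < X ω ∧ X ω ≤ d (Y ω)}
      = ((μ.map Y).prod (μ.map X)) {p : (ℝ × ℝ) × ℝ | c p.1 < p.2 ∧ p.2 ≤ d p.1} := by
    rw [← hmap, Measure.map_apply (hY.prodMk hX) hM2]
    rfl
  rw [key1, key2, Measure.prod_apply hM1, Measure.prod_apply hM2]
  have hslice : ∀ y : ℝ × ℝ,
      (μ.map X) (Prod.mk y ⁻¹' {p : (ℝ × ℝ) × ℝ | a ≤ p.2 ∧ c p.1 + a < p.2 ∧ p.2 ≤ d p.1 + a})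
        = ENNReal.ofReal (Real.exp (-a))
          * (μ.map X) (Prod.mk y ⁻¹' {p : (ℝ × ℝ) × ℝ | c p.1 < p.2 ∧ p.2 ≤ d p.1}) := by
    intro y
    have e1 : (Prod.mk y ⁻¹' {p : (ℝ × ℝ) × ℝ | a ≤ p.2 ∧ c p.1 + a < p.2 ∧ p.2 ≤ d p.1 + a})
        = {x : ℝ | a ≤ x ∧ c y + a < x ∧ x ≤ d y + a} := rfl
    have e2 : (Prod.mk y ⁻¹' {p : (ℝ × ℝ) × ℝ | c p.1 < p.2 ∧ p.2 ≤ d p.1})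
        = Ioc (c y) (d y) := by
      ext x; simp [mem_Ioc]
    rw [e1, e2, exp_shift (μ.map X) hexpν ha (c y) (d y)]
  rw [lintegral_congr hslice, lintegral_const_mul' _ _ ENNReal.ofReal_ne_top]



lemma eta_char {Ω : Type*} (σ : ℕ → Ω → ℝ) (zr : ℕ → ℝ) (hzr : ∀ n, 0 < zr n)
    (u : ℝ) (hu : 0 ≤ u) (ω : Ω) (hω : ∀ k, 0 ≤ σ k ω) (n : ℕ) :
    (⨆ (m : ℕ) (_ : ∑ k ∈ Finset.Icc 1 m, σ k ω / zr k ≤ u), (m : ℕ∞)) = (n : ℕ∞)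
      ↔ ((∑ k ∈ Finset.Icc 1 n, σ k ω / zr k ≤ u)
          ∧ u < ∑ k ∈ Finset.Icc 1 (n+1), σ k ω / zr k) := by
  have hmono : ∀ m m' : ℕ, m ≤ m' →
      (∑ k ∈ Finset.Icc 1 m, σ k ω / zr k) ≤ ∑ k ∈ Finset.Icc 1 m', σ k ω / zr k := by
    intro m m' h
    apply Finset.sum_le_sum_of_subset_of_nonneg
    · exact Finset.Icc_subset_Icc_right h
    · intro k _ _
      exact div_nonneg (hω k) (hzr k).le
  have hzero : (∑ k ∈ Finset.Icc 1 0, σ k ω / zr k) = 0 := by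
    rw [Finset.Icc_eq_empty (by omega)]
    simp
  constructor
  · intro h
    constructor
    · by_contra hno
      push_neg at hno
      rcases Nat.eq_zero_or_pos n with rfl | hn
      · rw [hzero] at hno; linarith
      · have hle : (⨆ (m : ℕ) (_ : ∑ k ∈ Finset.Icc 1 m, σ k ω / zr k ≤ u), (m : ℕ∞))
            ≤ ((n - 1 : ℕ) : ℕ∞) := by
          apply iSup₂_le
          intro m hm
          have hmn : m ≤ n - 1 := by
            by_contra hmn
            push_neg at hmn
            have := hmono n m (by omega)
            linarith
          exact_mod_cast hmn
        rw [h] at hle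
        have : n ≤ n - 1 := by exact_mod_cast hle
        omega
    · by_contra hno
      push_neg at hno
      have hge : ((n + 1 : ℕ) : ℕ∞)
          ≤ ⨆ (m : ℕ) (_ : ∑ k ∈ Finset.Icc 1 m, σ k ω / zr k ≤ u), (m : ℕ∞) :=
        le_iSup₂ (f := fun (m : ℕ) (_ : ∑ k ∈ Finset.Icc 1 m, σ k ω / zr k ≤ u) => (m : ℕ∞))
          (n + 1) hno
      rw [h] at hge
      have : n + 1 ≤ n := by exact_mod_cast hge
      omega
  · rintro ⟨h1, h2⟩
    apply le_antisymm
    · apply iSup₂_le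
      intro m hm
      have hmn : m ≤ n := by
        by_contra hmn
        push_neg at hmn
        have := hmono (n + 1) m (by omega)
        linarith
      exact_mod_cast hmn
    · exact le_iSup₂ (f := fun (m : ℕ) (_ : ∑ k ∈ Finset.Icc 1 m, σ k ω / zr k ≤ u) => (m : ℕ∞))
        n h1

lemma key_shift {Ω : Type*} [MeasurableSpace Ω] (μ : Measure Ω) [IsProbabilityMeasure μ]
    (σ : ℕ → Ω → ℝ) (hmeas : ∀ n, Measurable (σ n))
    (hindep : iIndepFun σ μ)
    (hexp : ∀ n : ℕ, ∀ c : ℝ, 0 ≤ c → μ {ω | c ≤ σ n ω} = ENNReal.ofReal (Real.exp (-c)))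
    (zr : ℕ → ℝ) (hzr : ∀ n, 0 < zr n)
    (k n : ℕ) (hk1 : 1 ≤ k) (hkn : k ≤ n) (t s : ℝ) (hs : 0 ≤ s) :
    μ ({ω | (∑ i ∈ Finset.Icc 1 n, σ i ω / zr i) ≤ t + s
          ∧ t + s < ∑ i ∈ Finset.Icc 1 (n+1), σ i ω / zr i} ∩ {ω | s * zr k ≤ σ k ω})
      = ENNReal.ofReal (Real.exp (-(s * zr k)))
        * μ {ω | (∑ i ∈ Finset.Icc 1 n, σ i ω / zr i) ≤ t
            ∧ t < ∑ i ∈ Finset.Icc 1 (n+1), σ i ω / zr i} := by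
  classical
  set S : Finset ℕ := (Finset.Icc 1 (n+1)).erase k with hS
  have hkmem : k ∈ Finset.Icc 1 n := Finset.mem_Icc.2 ⟨hk1, hkn⟩
  have hkmem1 : k ∈ Finset.Icc 1 (n+1) := Finset.mem_Icc.2 ⟨hk1, by omega⟩
  set R1 : Ω → ℝ := fun ω => ∑ i ∈ (Finset.Icc 1 n).erase k, σ i ω / zr i with hR1
  set R2 : Ω → ℝ := fun ω => ∑ i ∈ S, σ i ω / zr i with hR2
  have hR1m : Measurable R1 := Finset.measurable_sum _ fun i _ => (hmeas i).div_const _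
  have hR2m : Measurable R2 := Finset.measurable_sum _ fun i _ => (hmeas i).div_const _
  have hYm : Measurable (fun ω => (R1 ω, R2 ω)) := hR1m.prodMk hR2m
  -- independence
  have hd : Disjoint S ({k} : Finset ℕ) := by
    rw [Finset.disjoint_singleton_right]
    exact Finset.notMem_erase _ _
  have hbase := hindep.indepFun_finset S {k} hd hmeas
  let ψ : (↥S → ℝ) → ℝ × ℝ :=
    fun v => (∑ i : ↥S, if (i : ℕ) ≤ n then v i / zr i else 0,
              ∑ i : ↥S, v i / zr i)
  have hψm : Measurable ψ := by
    apply Measurable.prodMk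
    · apply Finset.measurable_sum
      intro i _
      by_cases h : (i : ℕ) ≤ n
      · simp only [h, if_true]
        exact (measurable_pi_apply i).div_const _
      · simp only [h, if_false]
        exact measurable_const
    · apply Finset.measurable_sum
      intro i _
      exact (measurable_pi_apply i).div_const _
  have hφm : Measurable (fun v : (({k} : Finset ℕ) → ℝ) => v ⟨k, Finset.mem_singleton_self k⟩) :=
    measurable_pi_apply _
  have hfilter : S.filter (fun i => i ≤ n) = (Finset.Icc 1 n).erase k := by
    ext i
    simp only [Finset.mem_filter, Finset.mem_erase, Finset.mem_Icc, hS]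
    omega
  have hYeq : (fun ω => (R1 ω, R2 ω)) = ψ ∘ (fun ω (i : ↥S) => σ (↑i) ω) := by
    funext ω
    apply Prod.ext
    · show R1 ω = ∑ i : ↥S, if (i : ℕ) ≤ n then σ i ω / zr i else 0
      rw [Finset.sum_coe_sort S (fun i => if i ≤ n then σ i ω / zr i else 0),
        ← Finset.sum_filter, hfilter]
    · show R2 ω = ∑ i : ↥S, σ i ω / zr i
      rw [Finset.sum_coe_sort S (fun i => σ i ω / zr i)]
  have hind : IndepFun (fun ω => (R1 ω, R2 ω)) (σ k) μ := by
    rw [hYeq]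
    exact hbase.comp hψm hφm
  -- apply shift identity
  have main := shift_identity μ (σ k) (hmeas k) (fun ω => (R1 ω, R2 ω)) hYm hind (hexp k)
    (mul_nonneg hs (hzr k).le)
    (fun p => (t - p.2) * zr k) (fun p => (t - p.1) * zr k)
    ((measurable_const.sub measurable_snd).mul_const _)
    ((measurable_const.sub measurable_fst).mul_const _)
  -- set identities
  have hsplit1 : ∀ ω, (∑ i ∈ Finset.Icc 1 n, σ i ω / zr i) = σ k ω / zr k + R1 ω :=
    fun ω => (Finset.add_sum_erase _ (fun i => σ i ω / zr i) hkmem).symm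
  have hsplit2 : ∀ ω, (∑ i ∈ Finset.Icc 1 (n+1), σ i ω / zr i) = σ k ω / zr k + R2 ω :=
    fun ω => (Finset.add_sum_erase _ (fun i => σ i ω / zr i) hkmem1).symm
  have ha1 : ∀ x R u : ℝ, (x / zr k + R ≤ u) ↔ (x ≤ (u - R) * zr k) := by
    intro x R u
    rw [← le_sub_iff_add_le, div_le_iff₀ (hzr k)]
  have ha2 : ∀ x R u : ℝ, (u < x / zr k + R) ↔ ((u - R) * zr k < x) := by
    intro x R u
    rw [← sub_lt_iff_lt_add, lt_div_iff₀ (hzr k)]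
  have E1 : {ω : Ω | (∑ i ∈ Finset.Icc 1 n, σ i ω / zr i) ≤ t
        ∧ t < ∑ i ∈ Finset.Icc 1 (n+1), σ i ω / zr i}
      = {ω : Ω | (fun p : ℝ × ℝ => (t - p.2) * zr k) ((fun ω => (R1 ω, R2 ω)) ω) < σ k ω
          ∧ σ k ω ≤ (fun p : ℝ × ℝ => (t - p.1) * zr k) ((fun ω => (R1 ω, R2 ω)) ω)} := by
    ext ω
    simp only [Set.mem_setOf_eq, hsplit1, hsplit2]
    constructor
    · rintro ⟨h1, h2⟩
      exact ⟨(ha2 _ _ _).1 h2, (ha1 _ _ _).1 h1⟩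
    · rintro ⟨h1, h2⟩
      exact ⟨(ha1 _ _ _).2 h2, (ha2 _ _ _).2 h1⟩
  have E2 : {ω : Ω | (∑ i ∈ Finset.Icc 1 n, σ i ω / zr i) ≤ t + s
        ∧ t + s < ∑ i ∈ Finset.Icc 1 (n+1), σ i ω / zr i} ∩ {ω : Ω | s * zr k ≤ σ k ω}
      = {ω : Ω | s * zr k ≤ σ k ω
          ∧ (fun p : ℝ × ℝ => (t - p.2) * zr k) ((fun ω => (R1 ω, R2 ω)) ω) + s * zr k < σ k ω
          ∧ σ k ω ≤ (fun p : ℝ × ℝ => (t - p.1) * zr k) ((fun ω => (R1 ω, R2 ω)) ω) + s * zr k} := by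
    ext ω
    simp only [Set.mem_inter_iff, Set.mem_setOf_eq, hsplit1, hsplit2]
    have hr1 : (t - R1 ω) * zr k + s * zr k = (t + s - R1 ω) * zr k := by ring
    have hr2 : (t - R2 ω) * zr k + s * zr k = (t + s - R2 ω) * zr k := by ring
    constructor
    · rintro ⟨⟨h1, h2⟩, h3⟩
      refine ⟨h3, ?_, ?_⟩
      · rw [hr2]; exact (ha2 _ _ _).1 h2
      · rw [hr1]; exact (ha1 _ _ _).1 h1
    · rintro ⟨h3, h2, h1⟩
      rw [hr2] at h2
      rw [hr1] at h1
      exact ⟨⟨(ha1 _ _ _).2 h1, (ha2 _ _ _).2 h2⟩, h3⟩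
  rw [E1, E2]
  exact main


end EmbeddedAux

open EmbeddedAux

set_option maxHeartbeats 1000000

/-- The conditional aperiodicity statement (3.74)/(3.76) in the proof of
Lemma 14: fix a trajectory `z` of the embedded jump chain of a Markov chain with
total jump rates `r > 0` outside the trap `0`, such that `z_n ∈ D` for infinitely
many `n`, with `r` bounded on `D`.  Let `σ_n` be i.i.d. exponential mean-one
holding variables, and `η(t) = sup{n : Σ_{k=1}^n σ_k / r(z_k) ≤ t}`.  Then for
every `S' > 0`,
`sup_{s ∈ [0,S']} Σ_{n : z_n ∈ D} |P[η(t) = n] − P[η(t+s) = n]| → 0` as `t → ∞`. -/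
theorem embedded_chain_conditional_aperiodicity
    {S : Type*} [Countable S]
    {Ω : Type*} [MeasurableSpace Ω] (μ : Measure Ω) [IsProbabilityMeasure μ]
    (σ : ℕ → Ω → ℝ) (hmeas : ∀ n, Measurable (σ n))
    (hindep : iIndepFun σ μ)
    (hexp : ∀ n : ℕ, ∀ c : ℝ, 0 ≤ c →
      μ {ω | c ≤ σ n ω} = ENNReal.ofReal (Real.exp (-c)))
    (z : ℕ → S) (r : S → ℝ) (hr : ∀ n, 0 < r (z n))
    (D : Set S) (hDbd : ∃ Cbound : ℝ, ∀ y ∈ D, r y ≤ Cbound)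
    (hDinf : {n : ℕ | z n ∈ D}.Infinite)
    (η : ℝ → Ω → ℕ∞)
    (hη : ∀ (t : ℝ) (ω : Ω),
      η t ω = ⨆ (n : ℕ) (_ : ∑ k ∈ Finset.Icc 1 n, σ k ω / r (z k) ≤ t), (n : ℕ∞)) :
    ∀ S' : ℝ, 0 < S' → ∀ ε : ℝ, 0 < ε → ∃ T₀ : ℝ, ∀ t : ℝ, T₀ ≤ t →
      ∀ s ∈ Set.Icc (0:ℝ) S',
        (∑' n : ℕ, if z n ∈ D then
            |(μ {ω | η t ω = (n : ℕ∞)}).toReal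
              - (μ {ω | η (t + s) ω = (n : ℕ∞)}).toReal|
          else 0) ≤ ε := by
  intro S' hS' ε hε
  classical
  obtain ⟨Cb, hCb⟩ := hDbd
  -- constants
  set CB : ℝ := max Cb 1 with hCBdef
  have hCB1 : (1:ℝ) ≤ CB := le_max_right _ _
  set E0 : ℝ := Real.exp (S' * CB) - 1 with hE0def
  have hE0 : 0 ≤ E0 := by
    have h1 : (1:ℝ) ≤ Real.exp (S' * CB) := Real.one_le_exp (by positivity)
    rw [hE0def]; linarith
  set M : ℕ := ⌈(4 * (E0 + 1)) / ε ^ 2⌉₊ + 1 with hMdef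
  have hM1 : 1 ≤ M := Nat.le_add_left 1 _
  have hMR : (0:ℝ) < M := by exact_mod_cast Nat.lt_of_lt_of_le Nat.zero_lt_one hM1
  have hMbound : E0 / M ≤ ε ^ 2 / 4 := by
    have hceil : (4 * (E0 + 1)) / ε ^ 2 ≤ (M:ℝ) := by
      have h := Nat.le_ceil ((4 * (E0 + 1)) / ε ^ 2)
      rw [hMdef]; push_cast; linarith
    have h2 : 4 * (E0 + 1) ≤ (M:ℝ) * ε ^ 2 := by
      rw [div_le_iff₀ (by positivity)] at hceil; linarith
    rw [div_le_div_iff₀ hMR (by norm_num)]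
    nlinarith
  -- indices
  have hI : ({n : ℕ | z n ∈ D} \ {0} : Set ℕ).Infinite := hDinf.diff (Set.finite_singleton 0)
  set emb : ℕ ↪ ↥({n : ℕ | z n ∈ D} \ {0}) := Set.Infinite.natEmbedding _ hI with hembdef
  set kf : ℕ → ℕ := fun j => ((emb j : ↥({n : ℕ | z n ∈ D} \ {0})) : ℕ) with hkfdef
  have hkD : ∀ j, z (kf j) ∈ D := fun j => ((emb j).2).1
  have hk0 : ∀ j, 1 ≤ kf j := by
    intro j
    have h := (emb j).2.2
    simp only [Set.mem_singleton_iff] at h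
    simp only [hkfdef]
    omega
  have hkinj : ∀ i j, kf i = kf j → i = j :=
    fun i j h => emb.injective (Subtype.ext h)
  set K : ℕ := (Finset.range M).sup kf + 1 with hKdef
  have hkK : ∀ j, j < M → kf j < K :=
    fun j hj => Nat.lt_succ_of_le (Finset.le_sup (Finset.mem_range.2 hj))
  -- measurability of partial sums
  have hTm : ∀ n : ℕ, Measurable (fun ω => ∑ i ∈ Finset.Icc 1 n, σ i ω / r (z i)) :=
    fun n => Finset.measurable_sum _ fun i _ => (hmeas i).div_const _
  -- choice of T₀
  have hiInter : (⋂ i : ℕ, {ω : Ω | (i:ℝ) < ∑ kk ∈ Finset.Icc 1 K, σ kk ω / r (z kk)}) = ∅ := by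
    ext ω
    simp only [Set.mem_iInter, Set.mem_setOf_eq, Set.mem_empty_iff_false, iff_false, not_forall,
      not_lt]
    exact exists_nat_ge _
  have htend : Filter.Tendsto
      (fun i : ℕ => μ {ω | (i:ℝ) < ∑ kk ∈ Finset.Icc 1 K, σ kk ω / r (z kk)})
      Filter.atTop (nhds 0) := by
    have h := tendsto_measure_iInter_atTop (μ := μ)
      (s := fun i : ℕ => {ω | (i:ℝ) < ∑ kk ∈ Finset.Icc 1 K, σ kk ω / r (z kk)})
      (fun i => (measurableSet_lt measurable_const (hTm K)).nullMeasurableSet)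
      (fun i j hij => by
        intro ω hω
        simp only [Set.mem_setOf_eq] at hω ⊢
        have hc : (i:ℝ) ≤ (j:ℝ) := Nat.cast_le.2 hij
        linarith)
      ⟨0, measure_ne_top μ _⟩
    rw [hiInter] at h
    simpa [Function.comp_def] using h
  have hev := htend.eventually_lt_const (show (0:ENNReal) < ENNReal.ofReal (ε/8) from
    ENNReal.ofReal_pos.2 (by positivity))
  obtain ⟨i₀, hi₀⟩ := hev.exists
  refine ⟨max (i₀ : ℝ) 0, ?_⟩
  intro t ht s hs
  obtain ⟨hs0, hsS'⟩ := hs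
  have hti₀ : (i₀ : ℝ) ≤ t := le_trans (le_max_left _ _) ht
  have ht0 : 0 ≤ t := le_trans (le_max_right _ _) ht
  have hts0 : 0 ≤ t + s := by linarith
  -- s-dependent definitions
  set a : ℕ → ℝ := fun j => s * r (z (kf j)) with hadef
  have ha0 : ∀ j, 0 ≤ a j := fun j => mul_nonneg hs0 (hr _).le
  have haB : ∀ j, a j ≤ S' * CB := by
    intro j
    have h1 : r (z (kf j)) ≤ CB := le_trans (hCb _ (hkD j)) (le_max_left _ _)
    have h2 := (hr (kf j)).le
    calc a j = s * r (z (kf j)) := rfl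
      _ ≤ S' * CB := mul_le_mul hsS' h1 h2 (le_of_lt hS')
  set C : ℕ → Set Ω := fun j => {ω | a j ≤ σ (kf j) ω} with hCdef
  have hCmeas : ∀ j, MeasurableSet (C j) := fun j => measurableSet_le measurable_const (hmeas _)
  have hCμ : ∀ j, μ (C j) = ENNReal.ofReal (Real.exp (-(a j))) := fun j => hexp _ _ (ha0 j)
  -- the full-measure set where all σ are nonnegative
  set Ω₀ : Set Ω := {ω | ∀ k, 0 ≤ σ k ω} with hΩ₀def
  have hΩ₀meas : MeasurableSet Ω₀ := by
    have h : Ω₀ = ⋂ k, {ω | 0 ≤ σ k ω} := by ext ω; simp [hΩ₀def]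
    rw [h]
    exact MeasurableSet.iInter fun k => measurableSet_le measurable_const (hmeas k)
  have hΩ₀c : μ Ω₀ᶜ = 0 := by
    have hc : Ω₀ᶜ = ⋃ k, {ω | (0:ℝ) ≤ σ k ω}ᶜ := by
      ext ω; simp [hΩ₀def]
    rw [hc]
    apply measure_iUnion_null
    intro k
    rw [measure_compl (measurableSet_le measurable_const (hmeas k)) (measure_ne_top μ _),
      hexp k 0 le_rfl]
    simp
  -- the events
  set A : ℕ → ℝ → Set Ω := fun n u =>
    ({ω | (∑ i ∈ Finset.Icc 1 n, σ i ω / r (z i)) ≤ u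
        ∧ u < ∑ i ∈ Finset.Icc 1 (n+1), σ i ω / r (z i)}) ∩ Ω₀ with hAdef
  have hAmeas : ∀ n u, MeasurableSet (A n u) := by
    intro n u
    rw [hAdef]
    refine MeasurableSet.inter ?_ hΩ₀meas
    rw [Set.setOf_and]
    exact (measurableSet_le (hTm n) measurable_const).inter
      (measurableSet_lt measurable_const (hTm (n+1)))
  have hμA : ∀ u : ℝ, 0 ≤ u → ∀ n : ℕ, μ {ω | η u ω = (n:ℕ∞)} = μ (A n u) := by
    intro u hu n
    apply measure_congr
    rw [Filter.eventuallyEq_set]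
    have hae : ∀ᵐ ω ∂μ, ω ∈ Ω₀ := by
      rw [MeasureTheory.ae_iff]
      exact hΩ₀c
    filter_upwards [hae] with ω hω
    simp only [Set.mem_setOf_eq, hAdef, Set.mem_inter_iff]
    rw [hη u ω]
    constructor
    · intro h
      exact ⟨(eta_char σ (fun i => r (z i)) hr u hu ω hω n).1 h, hω⟩
    · rintro ⟨h1, _⟩
      exact (eta_char σ (fun i => r (z i)) hr u hu ω hω n).2 h1
  -- monotonicity on Ω₀
  have hTmono : ∀ ω, ω ∈ Ω₀ → ∀ m m' : ℕ, m ≤ m' →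
      (∑ i ∈ Finset.Icc 1 m, σ i ω / r (z i)) ≤ ∑ i ∈ Finset.Icc 1 m', σ i ω / r (z i) := by
    intro ω hω m m' h
    apply Finset.sum_le_sum_of_subset_of_nonneg (Finset.Icc_subset_Icc_right h)
    intro i _ _
    exact div_nonneg (hω i) (hr i).le
  -- pairwise disjointness
  have hdisj : ∀ u : ℝ, ∀ m n : ℕ, m ≠ n → Disjoint (A m u) (A n u) := by
    intro u
    have key : ∀ m n : ℕ, m < n → Disjoint (A m u) (A n u) := by
      intro m n h
      rw [Set.disjoint_left]
      intro ω h1 h2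
      simp only [hAdef, Set.mem_inter_iff, Set.mem_setOf_eq] at h1 h2
      obtain ⟨⟨_, hb⟩, hω⟩ := h1
      obtain ⟨⟨hc, _⟩, _⟩ := h2
      have := hTmono ω hω (m+1) n (by omega)
      linarith
    intro m n hmn
    rcases lt_or_gt_of_ne hmn with h | h
    · exact key _ _ h
    · exact (key _ _ h).symm
  -- small indices are contained in the tail event
  have hsubK : ∀ u : ℝ, (i₀:ℝ) ≤ u → ∀ n : ℕ, n < K →
      A n u ⊆ {ω | (i₀:ℝ) < ∑ i ∈ Finset.Icc 1 K, σ i ω / r (z i)} := by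
    intro u hu n hn ω hωA
    simp only [hAdef, Set.mem_inter_iff, Set.mem_setOf_eq] at hωA
    obtain ⟨⟨h1, h2⟩, hω⟩ := hωA
    have h3 := hTmono ω hω (n+1) K (by omega)
    simp only [Set.mem_setOf_eq]
    linarith
  have hsmall : ∀ u : ℝ, (i₀:ℝ) ≤ u → ∀ F : Finset ℕ, (∀ n ∈ F, n < K) →
      (∑ n ∈ F, (μ (A n u)).toReal) ≤ ε / 8 := by
    intro u hu F hF
    have h1 : (∑ n ∈ F, (μ (A n u)).toReal) = (∑ n ∈ F, μ (A n u)).toReal :=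
      (ENNReal.toReal_sum (fun nn _ => measure_ne_top μ _)).symm
    have h2 : (∑ n ∈ F, μ (A n u)) = μ (⋃ n ∈ F, A n u) :=
      (measure_biUnion_finset (fun m _ n _ hmn => hdisj u m n hmn) (fun n _ => hAmeas n u)).symm
    have hsub : (⋃ n ∈ F, A n u) ⊆ {ω | (i₀:ℝ) < ∑ i ∈ Finset.Icc 1 K, σ i ω / r (z i)} :=
      Set.iUnion₂_subset fun n hn => hsubK u hu n (hF n hn)
    have h3 : μ (⋃ n ∈ F, A n u) ≤ ENNReal.ofReal (ε/8) :=
      le_trans (measure_mono hsub) (le_of_lt hi₀)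
    rw [h1, h2]
    calc (μ (⋃ n ∈ F, A n u)).toReal ≤ (ENNReal.ofReal (ε/8)).toReal :=
        ENNReal.toReal_mono ENNReal.ofReal_ne_top h3
      _ = ε/8 := ENNReal.toReal_ofReal (by positivity)
  -- the key shift identity
  have hkey : ∀ n : ℕ, K ≤ n → ∀ j : ℕ, j < M →
      μ (A n (t+s) ∩ C j) = ENNReal.ofReal (Real.exp (-(a j))) * μ (A n t) := by
    intro n hn j hj
    have hkn : kf j ≤ n := le_trans (le_of_lt (hkK j hj)) hn
    have hplain := key_shift μ σ hmeas hindep hexp (fun i => r (z i)) hr (kf j) n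
      (hk0 j) hkn t s hs0
    have e1 : μ (A n (t+s) ∩ C j) =
        μ (({ω | (∑ i ∈ Finset.Icc 1 n, σ i ω / r (z i)) ≤ t + s
            ∧ t + s < ∑ i ∈ Finset.Icc 1 (n+1), σ i ω / r (z i)}) ∩ C j) := by
      rw [hAdef]
      rw [Set.inter_right_comm]
      exact measure_inter_conull hΩ₀c
    have e2 : μ (A n t) =
        μ {ω | (∑ i ∈ Finset.Icc 1 n, σ i ω / r (z i)) ≤ t
            ∧ t < ∑ i ∈ Finset.Icc 1 (n+1), σ i ω / r (z i)} := by
      rw [hAdef]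
      exact measure_inter_conull hΩ₀c
    rw [e1, e2]
    rw [hCdef, hadef]
    exact hplain
  -- the density function
  set Dfun : Ω → ℝ := fun ω => (M:ℝ)⁻¹ *
    ∑ j ∈ Finset.range M, Real.exp (a j) * Set.indicator (C j) (fun _ => (1:ℝ)) ω with hDdef
  set Xf : ℕ → Ω → ℝ :=
    fun j ω => Real.exp (a j) * Set.indicator (C j) (fun _ => (1:ℝ)) ω - 1 with hXfdef
  have hindint : ∀ j, Integrable
      (fun ω => Real.exp (a j) * Set.indicator (C j) (fun _ => (1:ℝ)) ω) μ :=
    fun j => ((integrable_const (1:ℝ)).indicator (hCmeas j)).const_mul _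
  have hDint : Integrable Dfun μ := by
    rw [hDdef]
    exact (integrable_finset_sum _ (fun j _ => hindint j)).const_mul _
  have hWint : Integrable (fun ω => |Dfun ω - 1|) μ := (hDint.sub (integrable_const 1)).abs
  -- p_n as integral of Dfun
  have hInt1 : ∀ n : ℕ, K ≤ n → (μ (A n t)).toReal = ∫ ω in A n (t+s), Dfun ω ∂μ := by
    intro n hn
    have hterm : ∀ j ∈ Finset.range M,
        (∫ ω in A n (t+s), Real.exp (a j) * Set.indicator (C j) (fun _ => (1:ℝ)) ω ∂μ)
          = (μ (A n t)).toReal := by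
      intro j hj
      rw [integral_const_mul, setIntegral_indicator (hCmeas j), setIntegral_const, smul_eq_mul,
        mul_one, measureReal_def, hkey n hn j (Finset.mem_range.1 hj), ENNReal.toReal_mul,
        ENNReal.toReal_ofReal (Real.exp_nonneg _), ← mul_assoc, ← Real.exp_add]
      simp
    rw [hDdef]
    simp only []
    rw [integral_const_mul, integral_finset_sum _ (fun j _ => (hindint j).integrableOn),
      Finset.sum_congr rfl hterm, Finset.sum_const, Finset.card_range, nsmul_eq_mul, ← mul_assoc,
      inv_mul_cancel₀ (ne_of_gt hMR), one_mul]
  have hInt2 : ∀ n : ℕ, (μ (A n (t+s))).toReal = ∫ ω in A n (t+s), (1:ℝ) ∂μ := by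
    intro n
    rw [setIntegral_const, smul_eq_mul, mul_one, measureReal_def]
  have hbig : ∀ n : ℕ, K ≤ n →
      |(μ (A n t)).toReal - (μ (A n (t+s))).toReal|
        ≤ ∫ ω in A n (t+s), |Dfun ω - 1| ∂μ := by
    intro n hn
    rw [hInt1 n hn, hInt2 n,
      ← integral_sub (hDint.integrableOn) ((integrable_const 1).integrableOn)]
    have h := norm_integral_le_integral_norm (μ := μ.restrict (A n (t+s)))
      (f := fun ω => Dfun ω - 1)
    simpa [Real.norm_eq_abs] using h
  -- integrals of products
  have hprod : ∀ i jj : ℕ, (fun ω => Xf i ω * Xf jj ω) = fun ω =>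
      Real.exp (a i + a jj) * Set.indicator (C i ∩ C jj) (fun _ => (1:ℝ)) ω
      - Real.exp (a i) * Set.indicator (C i) (fun _ => (1:ℝ)) ω
      - Real.exp (a jj) * Set.indicator (C jj) (fun _ => (1:ℝ)) ω + 1 := by
    intro i jj
    funext ω
    rw [hXfdef]
    simp only []
    by_cases h1 : ω ∈ C i <;> by_cases h2 : ω ∈ C jj <;>
      simp [Set.indicator_of_mem, Set.indicator_of_notMem, h1, h2, Set.mem_inter_iff,
        Real.exp_add] <;> ring
  have hPint : ∀ i jj : ℕ, Integrable (fun ω =>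
      Real.exp (a i + a jj) * Set.indicator (C i ∩ C jj) (fun _ => (1:ℝ)) ω
      - Real.exp (a i) * Set.indicator (C i) (fun _ => (1:ℝ)) ω
      - Real.exp (a jj) * Set.indicator (C jj) (fun _ => (1:ℝ)) ω + 1) μ := by
    intro i jj
    exact (((((integrable_const (1:ℝ)).indicator ((hCmeas i).inter (hCmeas jj))).const_mul _).sub
      (hindint i)).sub (hindint jj)).add (integrable_const 1)
  have hXint : ∀ i jj : ℕ, Integrable (fun ω => Xf i ω * Xf jj ω) μ := by
    intro i jj
    rw [hprod i jj]
    exact hPint i jj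
  have hint3 : ∀ i jj : ℕ, Integrable (fun ω =>
      Real.exp (a i + a jj) * Set.indicator (C i ∩ C jj) (fun _ => (1:ℝ)) ω
      - Real.exp (a i) * Set.indicator (C i) (fun _ => (1:ℝ)) ω
      - Real.exp (a jj) * Set.indicator (C jj) (fun _ => (1:ℝ)) ω) μ := by
    intro i jj
    exact ((((integrable_const (1:ℝ)).indicator ((hCmeas i).inter (hCmeas jj))).const_mul _).sub
      (hindint i)).sub (hindint jj)
  have hint2 : ∀ i jj : ℕ, Integrable (fun ω =>
      Real.exp (a i + a jj) * Set.indicator (C i ∩ C jj) (fun _ => (1:ℝ)) ω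
      - Real.exp (a i) * Set.indicator (C i) (fun _ => (1:ℝ)) ω) μ := by
    intro i jj
    exact (((integrable_const (1:ℝ)).indicator ((hCmeas i).inter (hCmeas jj))).const_mul _).sub
      (hindint i)
  have hXeval : ∀ i jj : ℕ, (∫ ω, Xf i ω * Xf jj ω ∂μ)
      = Real.exp (a i + a jj) * (μ (C i ∩ C jj)).toReal
        - Real.exp (a i) * Real.exp (-(a i)) - Real.exp (a jj) * Real.exp (-(a jj)) + 1 := by
    intro i jj
    rw [hprod i jj]
    rw [integral_add (hint3 i jj) (integrable_const 1)]
    rw [integral_sub (hint2 i jj) (hindint jj)]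
    rw [integral_sub (((integrable_const (1:ℝ)).indicator
      ((hCmeas i).inter (hCmeas jj))).const_mul _) (hindint i)]
    rw [integral_const_mul, integral_const_mul, integral_const_mul]
    rw [integral_indicator_const (1:ℝ) ((hCmeas i).inter (hCmeas jj)),
      integral_indicator_const (1:ℝ) (hCmeas i), integral_indicator_const (1:ℝ) (hCmeas jj),
      integral_const]
    simp only [measureReal_def]
    rw [hCμ i, hCμ jj]
    simp [measure_univ, ENNReal.toReal_ofReal (Real.exp_nonneg _)]
  have hoff : ∀ i jj : ℕ, i ≠ jj → (∫ ω, Xf i ω * Xf jj ω ∂μ) = 0 := by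
    intro i jj hne
    have hIF : IndepFun (σ (kf i)) (σ (kf jj)) μ :=
      hindep.indepFun (fun h => hne (hkinj i jj h))
    have e1 : C i = σ (kf i) ⁻¹' (Set.Ici (a i)) := by
      simp only [hCdef]; rfl
    have e2 : C jj = σ (kf jj) ⁻¹' (Set.Ici (a jj)) := by
      simp only [hCdef]; rfl
    have hCI : μ (C i ∩ C jj)
        = ENNReal.ofReal (Real.exp (-(a i))) * ENNReal.ofReal (Real.exp (-(a jj))) := by
      rw [e1, e2, hIF.measure_inter_preimage_eq_mul _ _ measurableSet_Ici measurableSet_Ici]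
      rw [← e1, ← e2, hCμ i, hCμ jj]
    rw [hXeval i jj, hCI, ENNReal.toReal_mul, ENNReal.toReal_ofReal (Real.exp_nonneg _),
      ENNReal.toReal_ofReal (Real.exp_nonneg _)]
    have h1 : Real.exp (a i) * Real.exp (-(a i)) = 1 := by rw [← Real.exp_add]; simp
    have h2 : Real.exp (a jj) * Real.exp (-(a jj)) = 1 := by rw [← Real.exp_add]; simp
    rw [Real.exp_add]
    nlinarith [h1, h2]
  have hdiag : ∀ i : ℕ, (∫ ω, Xf i ω * Xf i ω ∂μ) ≤ E0 := by
    intro i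
    rw [hXeval i i, Set.inter_self, hCμ i, ENNReal.toReal_ofReal (Real.exp_nonneg _)]
    have h1 : Real.exp (a i) * Real.exp (-(a i)) = 1 := by rw [← Real.exp_add]; simp
    have h2 : Real.exp (a i + a i) * Real.exp (-(a i)) = Real.exp (a i) := by
      rw [← Real.exp_add]; ring_nf
    have h3 : Real.exp (a i) ≤ Real.exp (S' * CB) := Real.exp_le_exp.2 (haB i)
    rw [hE0def]
    linarith
  -- second moment bound
  have hD1 : (fun ω => (Dfun ω - 1)^2) = fun ω =>
      (M:ℝ)⁻¹ * (M:ℝ)⁻¹ * ∑ i ∈ Finset.range M, ∑ jj ∈ Finset.range M, Xf i ω * Xf jj ω := by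
    funext ω
    have hsum : Dfun ω - 1 = (M:ℝ)⁻¹ * ∑ j ∈ Finset.range M, Xf j ω := by
      rw [hDdef, hXfdef]
      simp only []
      rw [Finset.sum_sub_distrib, Finset.sum_const, Finset.card_range, nsmul_eq_mul, mul_one,
        mul_sub, inv_mul_cancel₀ (ne_of_gt hMR)]
    rw [hsum, ← Finset.sum_mul_sum]
    ring
  have hsqint : Integrable (fun ω => (Dfun ω - 1)^2) μ := by
    rw [hD1]
    exact (integrable_finset_sum _ (fun i _ => integrable_finset_sum _
      (fun jj _ => hXint i jj))).const_mul _
  have hsqbound : (∫ ω, (Dfun ω - 1)^2 ∂μ) ≤ E0 / M := by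
    rw [hD1, integral_const_mul, integral_finset_sum _
      (fun i _ => integrable_finset_sum _ (fun jj _ => hXint i jj))]
    have hterm : ∀ i ∈ Finset.range M,
        (∫ ω, ∑ jj ∈ Finset.range M, Xf i ω * Xf jj ω ∂μ) ≤ E0 := by
      intro i hi
      rw [integral_finset_sum _ (fun jj _ => hXint i jj),
        Finset.sum_eq_single_of_mem i hi (fun jj _ hne => hoff i jj (Ne.symm hne))]
      exact hdiag i
    have hsum2 : (∑ i ∈ Finset.range M, ∫ ω, ∑ jj ∈ Finset.range M, Xf i ω * Xf jj ω ∂μ)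
        ≤ (M:ℝ) * E0 := by
      calc (∑ i ∈ Finset.range M, ∫ ω, ∑ jj ∈ Finset.range M, Xf i ω * Xf jj ω ∂μ)
          ≤ ∑ _i ∈ Finset.range M, E0 := Finset.sum_le_sum hterm
        _ = (M:ℝ) * E0 := by rw [Finset.sum_const, Finset.card_range, nsmul_eq_mul]
    calc (M:ℝ)⁻¹ * (M:ℝ)⁻¹ * ∑ i ∈ Finset.range M, ∫ ω, ∑ jj ∈ Finset.range M,
          Xf i ω * Xf jj ω ∂μ
        ≤ (M:ℝ)⁻¹ * (M:ℝ)⁻¹ * ((M:ℝ) * E0) := by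
          apply mul_le_mul_of_nonneg_left hsum2 (by positivity)
      _ = E0 / M := by field_simp
  -- L¹ bound
  have hWbound : (∫ ω, |Dfun ω - 1| ∂μ) ≤ ε / 2 := by
    have hptw : ∀ ω, |Dfun ω - 1| ≤ (Dfun ω - 1)^2 / ε + ε / 4 := by
      intro ω
      have h := sq_nonneg (|Dfun ω - 1| - ε / 2)
      have habs : |Dfun ω - 1|^2 = (Dfun ω - 1)^2 := sq_abs _
      have key : ε * |Dfun ω - 1| ≤ (Dfun ω - 1)^2 + ε^2/4 := by nlinarith
      calc |Dfun ω - 1| = ε * |Dfun ω - 1| / ε := by field_simp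
        _ ≤ ((Dfun ω - 1)^2 + ε^2/4) / ε := by gcongr
        _ = (Dfun ω - 1)^2 / ε + ε / 4 := by field_simp
    have hgint : Integrable (fun ω => (Dfun ω - 1)^2 / ε + ε / 4) μ :=
      (hsqint.div_const ε).add (integrable_const (ε/4))
    have hmono := integral_mono hWint hgint hptw
    rw [integral_add (hsqint.div_const ε) (integrable_const (ε/4)), integral_div, integral_const,
      probReal_univ] at hmono
    simp only [ENNReal.toReal_one, smul_eq_mul, one_mul] at hmono
    have h1 : (∫ ω, (Dfun ω - 1)^2 ∂μ) / ε ≤ (E0/M)/ε := by gcongr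
    have h2 : (E0/M)/ε ≤ ε/4 := by
      rw [div_le_iff₀ hε]
      calc E0/(M:ℝ) ≤ ε^2/4 := hMbound
        _ = ε/4 * ε := by ring
    linarith
  -- final assembly
  apply Real.tsum_le_of_sum_range_le
  · intro n
    by_cases h : z n ∈ D
    · simp only [h, if_true]
      exact abs_nonneg _
    · simp only [h, if_false]
      exact le_refl 0
  · intro N
    rw [← Finset.sum_filter_add_sum_filter_not (Finset.range N) (fun n => n < K)]
    have hb1 : (∑ n ∈ (Finset.range N).filter (fun n => n < K),
        if z n ∈ D then
          |(μ {ω | η t ω = (n : ℕ∞)}).toReal - (μ {ω | η (t + s) ω = (n : ℕ∞)}).toReal|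
        else 0) ≤ ε/8 + ε/8 := by
      have hstep : ∀ n ∈ (Finset.range N).filter (fun n => n < K),
          (if z n ∈ D then
            |(μ {ω | η t ω = (n : ℕ∞)}).toReal - (μ {ω | η (t + s) ω = (n : ℕ∞)}).toReal|
          else 0) ≤ (μ (A n t)).toReal + (μ (A n (t+s))).toReal := by
        intro n hn
        have e1 := hμA t ht0 n
        have e2 := hμA (t+s) hts0 n
        by_cases h : z n ∈ D
        · simp only [h, if_true]
          rw [e1, e2]
          have h1 : (0:ℝ) ≤ (μ (A n t)).toReal := ENNReal.toReal_nonneg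
          have h2 : (0:ℝ) ≤ (μ (A n (t+s))).toReal := ENNReal.toReal_nonneg
          rw [abs_sub_le_iff]
          constructor <;> linarith
        · simp only [h, if_false]
          positivity
      calc (∑ n ∈ (Finset.range N).filter (fun n => n < K),
          if z n ∈ D then
            |(μ {ω | η t ω = (n : ℕ∞)}).toReal - (μ {ω | η (t + s) ω = (n : ℕ∞)}).toReal|
          else 0)
          ≤ ∑ n ∈ (Finset.range N).filter (fun n => n < K),
              ((μ (A n t)).toReal + (μ (A n (t+s))).toReal) := Finset.sum_le_sum hstep
        _ = (∑ n ∈ (Finset.range N).filter (fun n => n < K), (μ (A n t)).toReal)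
            + ∑ n ∈ (Finset.range N).filter (fun n => n < K), (μ (A n (t+s))).toReal :=
            Finset.sum_add_distrib
        _ ≤ ε/8 + ε/8 := add_le_add
            (hsmall t hti₀ _ (fun n hn => (Finset.mem_filter.1 hn).2))
            (hsmall (t+s) (by linarith) _ (fun n hn => (Finset.mem_filter.1 hn).2))
    have hb2 : (∑ n ∈ (Finset.range N).filter (fun n => ¬ n < K),
        if z n ∈ D then
          |(μ {ω | η t ω = (n : ℕ∞)}).toReal - (μ {ω | η (t + s) ω = (n : ℕ∞)}).toReal|
        else 0) ≤ ε/2 := by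
      have hstep : ∀ n ∈ (Finset.range N).filter (fun n => ¬ n < K),
          (if z n ∈ D then
            |(μ {ω | η t ω = (n : ℕ∞)}).toReal - (μ {ω | η (t + s) ω = (n : ℕ∞)}).toReal|
          else 0) ≤ ∫ ω in A n (t+s), |Dfun ω - 1| ∂μ := by
        intro n hn
        have hKn : K ≤ n := not_lt.1 (Finset.mem_filter.1 hn).2
        by_cases h : z n ∈ D
        · simp only [h, if_true]
          rw [hμA t ht0 n, hμA (t+s) hts0 n]
          exact hbig n hKn
        · simp only [h, if_false]
          exact integral_nonneg fun ω => abs_nonneg _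
      calc (∑ n ∈ (Finset.range N).filter (fun n => ¬ n < K),
          if z n ∈ D then
            |(μ {ω | η t ω = (n : ℕ∞)}).toReal - (μ {ω | η (t + s) ω = (n : ℕ∞)}).toReal|
          else 0)
          ≤ ∑ n ∈ (Finset.range N).filter (fun n => ¬ n < K),
              ∫ ω in A n (t+s), |Dfun ω - 1| ∂μ := Finset.sum_le_sum hstep
        _ = ∫ ω in ⋃ n ∈ (Finset.range N).filter (fun n => ¬ n < K), A n (t+s),
              |Dfun ω - 1| ∂μ :=
            (integral_biUnion_finset _ (fun n _ => hAmeas n _)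
              (fun m _ n _ hmn => hdisj (t+s) m n hmn)
              (fun n _ => hWint.integrableOn)).symm
        _ ≤ ∫ ω, |Dfun ω - 1| ∂μ :=
            setIntegral_le_integral hWint (Filter.Eventually.of_forall fun ω => abs_nonneg _)
        _ ≤ ε/2 := hWbound
    linarith
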